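/- Let R be a (not necessarily commutative) ring and S an arbitrary index set. If I is a left ideal of the polynomial ring R[x_k : k ∈ S] — realized as the monoid-ring of R over the free commutative monoid ⊕_{k∈S} ℕ of finitely supported functions S → ℕ — whose annihilator is nonzero, then there exists a nonzero element a ∈ R such that a · I = 0 (a acting as the constant polynomial a). -/

import Mathlib

/-- McCoy's theorem for left ideals in many variables: if `I` is an unfaithful left ideal of
the polynomial ring `R[x_k : k ∈ S]` (realized as the monoid-ring of `R` over the free
commutative monoid `⊕_{k ∈ S} ℕ` of finitely supported functions `S → ℕ`), then `a I = 0`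
for some nonzero `a ∈ R` (acting as the constant polynomial `a ε₀`). -/
theorem polynomialRing_unfaithful_left_ideal_killed_by_scalar
    {R : Type*} [Ring R] {S : Type*}
    (I : Ideal (AddMonoidAlgebra R (S →₀ ℕ)))
    (h : ∃ c : AddMonoidAlgebra R (S →₀ ℕ), c ≠ 0 ∧ ∀ x ∈ I, c * x = 0) :
    ∃ a : R, a ≠ 0 ∧ ∀ x ∈ I, AddMonoidAlgebra.single (0 : S →₀ ℕ) a * x = 0 := by
  classical
  letI : LinearOrder S := @linearOrderOfSTO _ WellOrderingRel _ (Classical.decRel _)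
  obtain ⟨c₀, hc₀, hI₀⟩ := h
  -- pick an annihilator of minimal support size
  have hex : ∃ n, ∃ c : AddMonoidAlgebra R (S →₀ ℕ),
      c ≠ 0 ∧ (∀ x ∈ I, c * x = 0) ∧ c.coeff.support.card = n := ⟨_, c₀, hc₀, hI₀, rfl⟩
  obtain ⟨c, hc, hcI, hcard⟩ := Nat.find_spec hex
  have hmin : ∀ c' : AddMonoidAlgebra R (S →₀ ℕ), (∀ x ∈ I, c' * x = 0) →
      c'.coeff.support.card < c.coeff.support.card → c' = 0 := by
    intro c' h1 h2
    by_contra h3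
    have := Nat.find_le (h := hex) ⟨c', h3, h1, rfl⟩
    omega
  -- the top monomial of c
  have hne : c.coeff.support.Nonempty := Finsupp.support_nonempty_iff.2 (mt AddMonoidAlgebra.coeff_eq_zero.1 hc)
  obtain ⟨m, hm, hmax⟩ := c.coeff.support.exists_max_image toLex hne
  have ha0 : c.coeff m ≠ 0 := Finsupp.mem_support_iff.1 hm
  -- key coefficient computation
  have key : ∀ (x : AddMonoidAlgebra R (S →₀ ℕ)) (k : S →₀ ℕ),
      (∀ j ∈ x.coeff.support, toLex k < toLex j → ∀ i, c.coeff i * x.coeff j = 0) →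
      (c * x).coeff (m + k) = c.coeff m * x.coeff k := by
    intro x k hk
    rw [AddMonoidAlgebra.coeff_mul]
    have hexp : (c.coeff.sum fun a₁ b₁ => x.coeff.sum fun a₂ b₂ => if a₁ + a₂ = m + k then b₁ * b₂ else 0)
        = ∑ i ∈ c.coeff.support, ∑ j ∈ x.coeff.support, if i + j = m + k then c.coeff i * x.coeff j else 0 := rfl
    rw [hexp]
    rw [Finset.sum_eq_single m]
    · -- the inner sum at m
      by_cases hks : k ∈ x.coeff.support
      · rw [Finset.sum_eq_single k]
        · simp
        · intro j hj hjk
          rw [if_neg]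
          intro hadd
          have : toLex j = toLex k := add_left_cancel
            (a := toLex m) (by rw [← toLex_add, ← toLex_add, hadd])
          exact hjk (toLex.injective this)
        · intro hk'; exact absurd hks hk'
      · have hxk : x.coeff k = 0 := Finsupp.notMem_support_iff.1 hks
        rw [hxk, mul_zero]
        apply Finset.sum_eq_zero
        intro j hj
        rw [if_neg]
        intro hadd
        have : toLex j = toLex k := add_left_cancel
          (a := toLex m) (by rw [← toLex_add, ← toLex_add, hadd])
        exact hks (toLex.injective this ▸ hj)
    · -- other i give zero inner sums
      intro i hi hine
      apply Finset.sum_eq_zero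
      intro j hj
      split_ifs with hadd
      case neg => rfl
      have hilt : toLex i < toLex m :=
        lt_of_le_of_ne (hmax i hi) (fun e => hine (toLex.injective e))
      have hkj : toLex k < toLex j := by
        by_contra hle
        push_neg at hle
        have h1 : toLex i + toLex j < toLex m + toLex k := add_lt_add_of_lt_of_le hilt hle
        have h2 : toLex i + toLex j = toLex m + toLex k := by
          rw [← toLex_add, ← toLex_add, hadd]
        exact h1.ne h2
      exact hk j hj hkj i
    · intro hm'; exact absurd hm hm'
  -- main induction: c kills every coefficient of every element of I
  have main : ∀ x ∈ I, ∀ j : S →₀ ℕ,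
      c * AddMonoidAlgebra.single (0 : S →₀ ℕ) (x.coeff j) = 0 := by
    intro x hx
    suffices H : ∀ n (j : S →₀ ℕ),
        (x.coeff.support.filter fun j' => toLex j < toLex j').card ≤ n →
        c * AddMonoidAlgebra.single (0 : S →₀ ℕ) (x.coeff j) = 0 by
      intro j; exact H _ j le_rfl
    intro n
    induction n using Nat.strong_induction_on with
    | _ n ih =>
      intro j hcardj
      by_cases hxj : x.coeff j = 0
      · rw [hxj]
        simp
      have IH' : ∀ j' ∈ x.coeff.support, toLex j < toLex j' → ∀ i, c.coeff i * x.coeff j' = 0 := by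
        intro j' hj' hlt i
        have hj'mem : j' ∈ x.coeff.support.filter fun j'' => toLex j < toLex j'' :=
          Finset.mem_filter.2 ⟨hj', hlt⟩
        have hsub : (x.coeff.support.filter fun j'' => toLex j' < toLex j'') ⊆
            (x.coeff.support.filter fun j'' => toLex j < toLex j'').erase j' := by
          intro j'' hj''
          obtain ⟨hmem, hlt'⟩ := Finset.mem_filter.1 hj''
          refine Finset.mem_erase.2 ⟨?_, Finset.mem_filter.2 ⟨hmem, hlt.trans hlt'⟩⟩
          intro e; exact absurd (e ▸ hlt') (lt_irrefl _)
        have hlt2 : (x.coeff.support.filter fun j'' => toLex j' < toLex j'').card < n := by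
          have h1 := Finset.card_le_card hsub
          have h2 := Finset.card_erase_lt_of_mem hj'mem
          omega
        have := ih _ hlt2 j' le_rfl
        have : (c * AddMonoidAlgebra.single (0 : S →₀ ℕ) (x.coeff j')).coeff i = 0 := by rw [this]; rfl
        rwa [AddMonoidAlgebra.coeff_mul_single_zero] at this
      have haj : c.coeff m * x.coeff j = 0 := by
        have h0 : (c * x).coeff (m + j) = 0 := by rw [hcI x hx]; rfl
        rw [key x j IH'] at h0
        exact h0
      set c' := c * AddMonoidAlgebra.single (0 : S →₀ ℕ) (x.coeff j) with hc'def
      have hc'ann : ∀ z ∈ I, c' * z = 0 := by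
        intro z hz
        rw [hc'def, mul_assoc]
        exact hcI _ (I.mul_mem_left _ hz)
      have hc'app : ∀ i, c'.coeff i = c.coeff i * x.coeff j := by
        intro i; rw [hc'def, AddMonoidAlgebra.coeff_mul_single_zero]
      have hsupp : c'.coeff.support ⊆ c.coeff.support := by
        intro i hi
        rw [Finsupp.mem_support_iff] at hi ⊢
        intro hci
        exact hi (by rw [hc'app, hci, zero_mul])
      have hmne : m ∉ c'.coeff.support := by
        rw [Finsupp.notMem_support_iff, hc'app]
        exact haj
      have hcard' : c'.coeff.support.card < c.coeff.support.card :=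
        Finset.card_lt_card (Finset.ssubset_iff_of_subset hsupp |>.2 ⟨m, hm, hmne⟩)
      exact hmin c' hc'ann hcard'
  refine ⟨c.coeff m, ha0, ?_⟩
  intro x hx
  ext i
  rw [AddMonoidAlgebra.coeff_single_zero_mul]
  have := main x hx i
  have h2 : (c * AddMonoidAlgebra.single (0 : S →₀ ℕ) (x.coeff i)).coeff m = 0 := by rw [this]; rfl
  rw [AddMonoidAlgebra.coeff_mul_single_zero] at h2
  simpa using h2
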